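/- Let f : I → ℝ be continuous on an interval I and c ≥ 1. If f satisfies condition P_{c−1} (for all x < y with f(x) = f(y), max_{x ≤ t ≤ y}|f(x) − f(t)| ≤ (c−1)|x−y|), then the graph of f is symmetrically c-monotone: for all x < y < z in I, both |ψ(x) − ψ(y)| ≤ c|ψ(x) − ψ(z)| and |ψ(z) − ψ(y)| ≤ c|ψ(x) − ψ(z)|, where ψ(t) = (t, f(t)). -/

import Mathlib

/-- The natural parametrization of the graph of `f`, as a map into the Euclidean plane. -/
noncomputable def graphMap (f : ℝ → ℝ) (t : ℝ) : EuclideanSpace ℝ (Fin 2) := !₂[t, f t]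

lemma norm_graphMap_sub' (f : ℝ → ℝ) (s t : ℝ) (g : ℝ → EuclideanSpace ℝ (Fin 2))
    (hg : ∀ u, g u = ![u, f u]) :
    ‖g s - g t‖ = Real.sqrt ((s - t)^2 + (f s - f t)^2) := by
  rw [EuclideanSpace.norm_eq]
  congr 1
  simp [hg, Fin.sum_univ_two, Real.norm_eq_abs, sq_abs]

lemma negOrd (I : Set ℝ) (hI : I.OrdConnected) : (-I).OrdConnected := by
  constructor
  intro a ha b hb t ht
  have : -t ∈ Set.Icc (-b) (-a) := ⟨by linarith [ht.2], by linarith [ht.1]⟩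
  exact Set.mem_neg.mpr (hI.out hb ha this)
lemma coreUp (I : Set ℝ) (hI : I.OrdConnected) (f : ℝ → ℝ)
    (hf : ContinuousOn f I) (c : ℝ) (hc : 1 ≤ c)
    (hP : ∀ x ∈ I, ∀ y ∈ I, x < y → f x = f y →
      ∀ t ∈ Set.Icc x y, |f x - f t| ≤ (c - 1) * |x - y|)
    (x : ℝ) (hx : x ∈ I) (y : ℝ) (hy : y ∈ I) (z : ℝ) (hz : z ∈ I)
    (hxy : x < y) (hyz : y < z) (hfy1 : f x < f y) (hfy2 : f z < f y) :
    (x - y)^2 + (f x - f y)^2 ≤ c^2 * ((x - z)^2 + (f x - f z)^2) := by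
  have hc0 : (0:ℝ) ≤ c - 1 := by linarith
  rcases le_or_gt (f z) (f x) with h1 | h1
  · have hsub : Set.Icc y z ⊆ I := hI.out hy hz
    have hmem : f x ∈ Set.Icc (f z) (f y) := ⟨h1, le_of_lt hfy1⟩
    obtain ⟨w, hw, hfw⟩ := intermediate_value_Icc' (le_of_lt hyz) (hf.mono hsub) hmem
    have hxw : x < w := lt_of_lt_of_le hxy hw.1
    have hb := hP x hx w (hsub hw) hxw hfw.symm y ⟨le_of_lt hxy, hw.1⟩
    have hwx : |x - w| ≤ z - x := by
      rw [abs_sub_comm, abs_of_nonneg (by linarith)]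
      linarith [hw.2]
    have habs : |f x - f y| ≤ (c - 1) * (z - x) :=
      le_trans hb (mul_le_mul_of_nonneg_left hwx hc0)
    have h2 : (f x - f y)^2 ≤ ((c-1)*(z-x))^2 := by
      have := abs_nonneg (f x - f y)
      nlinarith [sq_abs (f x - f y)]
    nlinarith [sq_nonneg (f x - f z), sq_nonneg (x - z), hxy, hyz, hc]
  · have hsub : Set.Icc x y ⊆ I := hI.out hx hy
    have hmem : f z ∈ Set.Icc (f x) (f y) := ⟨le_of_lt h1, le_of_lt hfy2⟩
    obtain ⟨w, hw, hfw⟩ := intermediate_value_Icc (le_of_lt hxy) (hf.mono hsub) hmem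
    have hwz : w < z := lt_of_le_of_lt hw.2 hyz
    have hb := hP w (hsub hw) z hz hwz (by rw [hfw]) y ⟨hw.2, le_of_lt hyz⟩
    have hwzb : |w - z| ≤ z - x := by
      rw [abs_sub_comm, abs_of_nonneg (by linarith)]
      linarith [hw.1]
    have habs : |f w - f y| ≤ (c - 1) * (z - x) :=
      le_trans hb (mul_le_mul_of_nonneg_left hwzb hc0)
    rw [hfw] at habs
    have hb2 : f y - f z ≤ (c - 1) * (z - x) := by
      rw [abs_sub_comm] at habs
      exact le_trans (le_abs_self _) habs
    nlinarith [sq_nonneg (z - x - (f z - f x)), sq_nonneg (z - x), sq_nonneg (f z - f x),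
      mul_nonneg hc0 (sq_nonneg (z - x - (f z - f x))),
      mul_nonneg hc0 (sq_nonneg (z - x)), mul_nonneg hc0 (sq_nonneg (f z - f x)),
      mul_nonneg (sub_nonneg.2 h1.le) (sub_nonneg.2 hb2), hxy, hyz,
      mul_nonneg hc0 (mul_nonneg (sub_nonneg.2 h1.le) (by linarith : (0:ℝ) ≤ z - x))]

lemma core (I : Set ℝ) (hI : I.OrdConnected) (f : ℝ → ℝ)
    (hf : ContinuousOn f I) (c : ℝ) (hc : 1 ≤ c)
    (hP : ∀ x ∈ I, ∀ y ∈ I, x < y → f x = f y →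
      ∀ t ∈ Set.Icc x y, |f x - f t| ≤ (c - 1) * |x - y|)
    (x : ℝ) (hx : x ∈ I) (y : ℝ) (hy : y ∈ I) (z : ℝ) (hz : z ∈ I)
    (hxy : x < y) (hyz : y < z) :
    (x - y)^2 + (f x - f y)^2 ≤ c^2 * ((x - z)^2 + (f x - f z)^2) := by
  rcases le_or_gt (f y) (max (f x) (f z)) with hup | hup
  · rcases le_or_gt (min (f x) (f z)) (f y) with hlo | hlo
    · -- f y between: easy
      have h1 : (f x - f y)^2 ≤ (f x - f z)^2 := by
        rcases le_total (f x) (f z) with h | h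
        · have := min_eq_left h ▸ hlo
          have := max_eq_right h ▸ hup
          nlinarith
        · have := min_eq_right h ▸ hlo
          have := max_eq_left h ▸ hup
          nlinarith
      have h2 : (x-y)^2 ≤ (x-z)^2 := by nlinarith
      have hc2 : (1:ℝ) ≤ c^2 := by nlinarith
      have hB : (0:ℝ) ≤ (x-z)^2 + (f x - f z)^2 := by positivity
      calc (x - y)^2 + (f x - f y)^2 ≤ (x-z)^2 + (f x - f z)^2 := by linarith
        _ = 1 * ((x-z)^2 + (f x - f z)^2) := (one_mul _).symm
        _ ≤ c^2 * ((x-z)^2 + (f x - f z)^2) := mul_le_mul_of_nonneg_right hc2 hB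
    · -- f y below both: apply coreUp to -f
      have hP' : ∀ a ∈ I, ∀ b ∈ I, a < b → (fun t => -f t) a = (fun t => -f t) b →
          ∀ t ∈ Set.Icc a b, |(fun t => -f t) a - (fun t => -f t) t| ≤ (c - 1) * |a - b| := by
        intro a ha b hb hab hfeq t ht
        have : f a = f b := by simpa using hfeq
        show |(-f a) - (-f t)| ≤ (c - 1) * |a - b|
        rw [show (-f a) - (-f t) = -(f a - f t) by ring, abs_neg]
        exact hP a ha b hb hab this t ht
      have h := coreUp I hI (fun t => -f t) hf.neg c hc hP' x hx y hy z hz hxy hyz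
        (by linarith [lt_min_iff.mp hlo]) (by linarith [lt_min_iff.mp hlo])
      nlinarith [h]
  · exact coreUp I hI f hf c hc hP x hx y hy z hz hxy hyz
      (lt_of_le_of_lt (le_max_left _ _) hup) (lt_of_le_of_lt (le_max_right _ _) hup)

theorem stmt_2' (I : Set ℝ) (hI : I.OrdConnected) (f : ℝ → ℝ)
    (hf : ContinuousOn f I) (c : ℝ) (hc : 1 ≤ c)
    (hP : ∀ x ∈ I, ∀ y ∈ I, x < y → f x = f y →
      ∀ t ∈ Set.Icc x y, |f x - f t| ≤ (c - 1) * |x - y|) :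
    ∀ x ∈ I, ∀ y ∈ I, ∀ z ∈ I, x < y → y < z →
      (x - y)^2 + (f x - f y)^2 ≤ c^2 * ((x - z)^2 + (f x - f z)^2) ∧
      (z - y)^2 + (f z - f y)^2 ≤ c^2 * ((x - z)^2 + (f x - f z)^2) := by
  intro x hx y hy z hz hxy hyz
  refine ⟨core I hI f hf c hc hP x hx y hy z hz hxy hyz, ?_⟩
  set g : ℝ → ℝ := fun t => f (-t) with hg
  have hgc : ContinuousOn g (-I) :=
    hf.comp continuousOn_neg (fun t ht => Set.mem_neg.mp ht)
  have hPg : ∀ a ∈ (-I), ∀ b ∈ (-I), a < b → g a = g b →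
      ∀ t ∈ Set.Icc a b, |g a - g t| ≤ (c - 1) * |a - b| := by
    intro a ha b hb hab hfeq t ht
    have hfeq' : f (-a) = f (-b) := hfeq
    have h0 := hP (-b) (Set.mem_neg.mp hb) (-a) (Set.mem_neg.mp ha) (by linarith)
      hfeq'.symm (-t) ⟨by linarith [ht.2], by linarith [ht.1]⟩
    show |f (-a) - f (-t)| ≤ (c - 1) * |a - b|
    rw [hfeq']
    rwa [show (-b:ℝ) - -a = a - b by ring] at h0
  have h2 := core (-I) (negOrd I hI) g hgc c hc hPg (-z) (Set.neg_mem_neg.mpr hz)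
    (-y) (Set.neg_mem_neg.mpr hy) (-x) (Set.neg_mem_neg.mpr hx) (by linarith) (by linarith)
  have e1 : g (-z) = f z := by simp [hg]
  have e2 : g (-y) = f y := by simp [hg]
  have e3 : g (-x) = f x := by simp [hg]
  rw [e1, e2, e3] at h2
  nlinarith [h2]

/-- If `f : I → ℝ` is continuous on an interval `I`, `c ≥ 1`, and `f` satisfies condition
`P_{c-1}`, then the graph of `f` is symmetrically `c`-monotone: for all `x < y < z` in `I`,
both `|ψx − ψy| ≤ c|ψx − ψz|` and `|ψz − ψy| ≤ c|ψx − ψz|`. -/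
theorem stmt_2 (I : Set ℝ) (hI : I.OrdConnected) (f : ℝ → ℝ)
    (hf : ContinuousOn f I) (c : ℝ) (hc : 1 ≤ c)
    (hP : ∀ x ∈ I, ∀ y ∈ I, x < y → f x = f y →
      ∀ t ∈ Set.Icc x y, |f x - f t| ≤ (c - 1) * |x - y|) :
    ∀ x ∈ I, ∀ y ∈ I, ∀ z ∈ I, x < y → y < z →
      ‖graphMap f x - graphMap f y‖ ≤ c * ‖graphMap f x - graphMap f z‖ ∧
      ‖graphMap f z - graphMap f y‖ ≤ c * ‖graphMap f x - graphMap f z‖ := by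
  intro x hx y hy z hz hxy hyz
  obtain ⟨h1, h2⟩ := stmt_2' I hI f hf c hc hP x hx y hy z hz hxy hyz
  have hn : ∀ s t : ℝ, ‖graphMap f s - graphMap f t‖ =
      Real.sqrt ((s - t)^2 + (f s - f t)^2) :=
    fun s t => norm_graphMap_sub' f s t (graphMap f) (fun _ => rfl)
  have hmul : c * Real.sqrt ((x - z)^2 + (f x - f z)^2)
      = Real.sqrt (c^2 * ((x - z)^2 + (f x - f z)^2)) := by
    rw [Real.sqrt_mul (sq_nonneg c), Real.sqrt_sq (by linarith : (0:ℝ) ≤ c)]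
  constructor
  · rw [hn, hn, hmul]
    exact Real.sqrt_le_sqrt h1
  · rw [hn, hn, hmul]
    exact Real.sqrt_le_sqrt h2
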